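/- Let M be a model of a complete first-order theory T and let A ⊆ M be an H-free set. Then A has no nontrivial subsets definable with parameters from A: for every formula φ(x, y₁,…,yₖ) and every tuple ā = (a₁,…,aₖ) of elements of A, letting A₀ = {a₁,…,aₖ} and B = {b ∈ A : M ⊨ φ(b, ā)}, either B ∖ A₀ = ∅ or (A ∖ B) ∖ A₀ = ∅ (that is, B differs from ∅ or from A only by elements of the finite parameter set A₀). -/

import Mathlib

open FirstOrder FirstOrder.Language Set

variable {L : Language} {M : Type*} [L.Structure M]

/-- The family of universes of elementary submodels. -/
def ESub (L : Language) (M : Type*) [L.Structure M] : Set (Set M) :=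
  {N | ∃ S : L.ElementarySubstructure M, (S : Set M) = N}

/-- `A ⊆ M` is H-free (arity 1). -/
def IsHFree1 (L : Language) (M : Type*) [L.Structure M] (A : Set M) : Prop :=
  A.Infinite ∧
    ∃ (k : ℕ) (φ : L.Formula (Fin 1 ⊕ Fin k)) (c : Fin k → M),
      A = {x | φ.Realize (Sum.elim (fun _ => x) c)} ∧
      ∀ A' : Set M, A' ⊆ A → A'.Infinite →
        ∃ Z ∈ ESub L M, (∀ i, c i ∈ Z) ∧ A' = A ∩ Z


/-- x satisfies ψ(x, params-inr), φ(x, params-inl), and x ≠ each inl-param. -/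
noncomputable def chi {k m : ℕ} (φ : L.Formula (Fin 1 ⊕ Fin k)) (ψ : L.Formula (Fin 1 ⊕ Fin m)) :
    L.BoundedFormula (Fin k ⊕ Fin m) 1 :=
  ((BoundedFormula.relabel (Sum.elim (fun _ => Sum.inr 0) (fun j => Sum.inl (Sum.inr j))) ψ :
      L.BoundedFormula (Fin k ⊕ Fin m) (1 + 0)) ⊓
    (BoundedFormula.relabel (Sum.elim (fun _ => Sum.inr 0) (fun i => Sum.inl (Sum.inl i))) φ :
      L.BoundedFormula (Fin k ⊕ Fin m) (1 + 0))) ⊓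
  BoundedFormula.iInf (fun i : Fin k =>
    ∼(Term.bdEqual (Term.var (Sum.inr 0)) (Term.var (Sum.inl (Sum.inl i)))))

theorem realize_chi_ex {k m : ℕ} (φ : L.Formula (Fin 1 ⊕ Fin k)) (ψ : L.Formula (Fin 1 ⊕ Fin m))
    {N : Type*} [L.Structure N] (v : Fin k ⊕ Fin m → N) :
    (chi φ ψ).ex.Realize v (default : Fin 0 → N) ↔
      ∃ y : N, ψ.Realize (Sum.elim (fun _ => y) (v ∘ Sum.inr)) ∧
        φ.Realize (Sum.elim (fun _ => y) (v ∘ Sum.inl)) ∧ ∀ i, y ≠ v (Sum.inl i) := by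
  rw [BoundedFormula.realize_ex]
  refine exists_congr fun y => ?_
  rw [chi]
  simp only [BoundedFormula.realize_inf, BoundedFormula.realize_relabel,
    BoundedFormula.realize_iInf, BoundedFormula.realize_not, BoundedFormula.realize_bdEqual,
    Term.realize_var, Finset.mem_univ, forall_true_left]
  have h0 : ∀ (xs : Fin 0 → N) (w : Fin 1 ⊕ Fin m → N),
      BoundedFormula.Realize ψ w xs ↔ ψ.Realize w := fun xs w => by
    rw [Formula.Realize, Subsingleton.elim xs default]
  have h0' : ∀ (xs : Fin 0 → N) (w : Fin 1 ⊕ Fin k → N),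
      BoundedFormula.Realize φ w xs ↔ φ.Realize w := fun xs w => by
    rw [Formula.Realize, Subsingleton.elim xs default]
  have h1 : (Sum.elim v (Fin.snoc (default : Fin 0 → N) y ∘ Fin.castAdd 0) ∘
      Sum.elim (fun _ => Sum.inr 0) fun j => Sum.inl (Sum.inr j) : Fin 1 ⊕ Fin m → N) =
      Sum.elim (fun _ => y) (v ∘ Sum.inr) := by
    funext x; cases x <;> simp [Fin.snoc]
  have h2 : (Sum.elim v (Fin.snoc (default : Fin 0 → N) y ∘ Fin.castAdd 0) ∘
      Sum.elim (fun _ => Sum.inr 0) fun i => Sum.inl (Sum.inl i) : Fin 1 ⊕ Fin k → N) =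
      Sum.elim (fun _ => y) (v ∘ Sum.inl) := by
    funext x; cases x <;> simp [Fin.snoc]
  rw [h1, h2, h0, h0']
  simp [and_assoc, Ne, Fin.snoc]

theorem key {m k : ℕ} {A : Set M} (ψ : L.Formula (Fin 1 ⊕ Fin m)) (c : Fin m → M)
    (hAdef : A = {x | ψ.Realize (Sum.elim (fun _ => x) c)})
    (hfree : ∀ A' : Set M, A' ⊆ A → A'.Infinite →
        ∃ Z ∈ ESub L M, (∀ i, c i ∈ Z) ∧ A' = A ∩ Z)
    (φ : L.Formula (Fin 1 ⊕ Fin k)) (a : Fin k → M) (ha : ∀ i, a i ∈ A)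
    (hinf : (A \ {x | φ.Realize (Sum.elim (fun _ => x) a)}).Infinite)
    {b : M} (hbA : b ∈ A) (hbφ : φ.Realize (Sum.elim (fun _ => b) a))
    (hbr : b ∉ Set.range a) : False := by
  set P : Set M := {x | φ.Realize (Sum.elim (fun _ => x) a)} with hP
  set A' : Set M := (A \ P) ∪ Set.range a with hA'
  have hsub : A' ⊆ A := by
    rintro x (hx | ⟨i, rfl⟩)
    · exact hx.1
    · exact ha i
  obtain ⟨Z, ⟨S, hSZ⟩, hc, hAZ⟩ := hfree A' hsub (hinf.mono subset_union_left)
  have haZ : ∀ i, a i ∈ Z := fun i => (by rw [← hAZ]; exact Or.inr ⟨i, rfl⟩ : a i ∈ A ∩ Z).2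
  have hmem : ∀ x : M, x ∈ Z → x ∈ S := fun x hx => by
    rw [← SetLike.mem_coe, hSZ]; exact hx
  set v : Fin k ⊕ Fin m → S :=
    Sum.elim (fun i => ⟨a i, hmem _ (haZ i)⟩) (fun j => ⟨c j, hmem _ (hc j)⟩) with hv
  have hcoe : ((↑) : S → M) ∘ v = Sum.elim a c := by funext x; cases x <;> rfl
  have hMreal : (chi φ ψ).ex.Realize (((↑) : S → M) ∘ v) (default : Fin 0 → M) := by
    rw [realize_chi_ex, hcoe]
    refine ⟨b, ?_, ?_, ?_⟩
    · have := hAdef ▸ hbA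
      exact this
    · exact hbφ
    · intro i h
      exact hbr ⟨i, (h.symm : a i = b)⟩
  have hSreal : (chi φ ψ).ex.Realize v (default : Fin 0 → S) :=
    (S.subtype.map_formula ((chi φ ψ).ex : L.Formula (Fin k ⊕ Fin m)) v).mp hMreal
  rw [realize_chi_ex] at hSreal
  obtain ⟨y, hyψ, hyφ, hyne⟩ := hSreal
  -- transfer back to M
  have hψM : ψ.Realize (Sum.elim (fun _ => (y : M)) c) := by
    have := (S.subtype.map_formula ψ (Sum.elim (fun _ => y) (v ∘ Sum.inr))).mpr hyψ
    convert this using 2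
    funext x; cases x <;> rfl
  have hφM : φ.Realize (Sum.elim (fun _ => (y : M)) a) := by
    have := (S.subtype.map_formula φ (Sum.elim (fun _ => y) (v ∘ Sum.inl))).mpr hyφ
    convert this using 2
    funext x; cases x <;> rfl
  have hyA : (y : M) ∈ A := by rw [hAdef]; exact hψM
  have hyZ : (y : M) ∈ Z := by rw [← hSZ]; exact y.2
  have hyA' : (y : M) ∈ A' := by rw [hAZ]; exact ⟨hyA, hyZ⟩
  rcases hyA' with hy | ⟨i, hi⟩
  · exact hy.2 hφM
  · exact hyne i (Subtype.ext hi.symm)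

theorem stmt2 (T : L.Theory) (hT : T.IsComplete) (hM : M ⊨ T)
    (A : Set M) (hA : IsHFree1 L M A)
    (k : ℕ) (φ : L.Formula (Fin 1 ⊕ Fin k)) (a : Fin k → M)
    (ha : ∀ i, a i ∈ A) :
    {b ∈ A | φ.Realize (Sum.elim (fun _ => b) a)} \ Set.range a = ∅ ∨
    (A \ {b ∈ A | φ.Realize (Sum.elim (fun _ => b) a)}) \ Set.range a = ∅ := by
  obtain ⟨hAinf, m, ψ, c, hAdef, hfree⟩ := hA
  by_contra hcon
  push_neg at hcon
  obtain ⟨h1, h2⟩ := hcon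
  obtain ⟨b, ⟨hbA, hbφ⟩, hbr⟩ := h1
  obtain ⟨d, ⟨hdA, hdB⟩, hdr⟩ := h2
  have hdφ : ¬ φ.Realize (Sum.elim (fun _ => d) a) := fun h => hdB ⟨hdA, h⟩
  set P : Set M := {x | φ.Realize (Sum.elim (fun _ => x) a)} with hP
  by_cases hfin : (A \ P).Infinite
  · exact key ψ c hAdef hfree φ a ha hfin hbA hbφ hbr
  · rw [Set.not_infinite] at hfin
    have hinf' : (A \ {x | (φ.not).Realize (Sum.elim (fun _ => x) a)}).Infinite := by
      have : A \ (A \ P) ⊆ A \ {x | (φ.not).Realize (Sum.elim (fun _ => x) a)} := by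
        intro x hx
        refine ⟨hx.1, fun hx2 => ?_⟩
        rw [Set.mem_setOf_eq, Formula.realize_not] at hx2
        exact hx.2 ⟨hx.1, hx2⟩
      exact (hAinf.diff hfin).mono this
    exact key ψ c hAdef hfree φ.not a ha hinf'
      hdA (by rw [Formula.realize_not]; exact hdφ) hdr
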